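/- Let (s_1,…,s_N) be a Cuntz family of order N on a complex Hilbert space H, let J = (j_1,…,j_l) be a finite word with letters in {1,…,N}, and let Ω ∈ H be a unit vector which is cyclic for the family and satisfies s_J Ω = Ω, such that the vectors s_{j_i}⋯s_{j_l} Ω (i = 1,…,l) form an orthonormal family. Set e_i := s_{j_i}⋯s_{j_l} Ω and V_i := the closed linear span of {s_K s_L^* e_i : |K| = |L|}. Then the subspaces V_1,…,V_l are pairwise orthogonal and H = V_1 ⊕ ⋯ ⊕ V_l; each V_i is invariant under every operator s_K s_L^* with |K| = |L|; the vector e_i satisfies the P[σ_i J]-condition, where σ_i J := (j_i,…,j_l,j_1,…,j_{i−1}); and for each i, every bounded operator on V_i commuting with all restrictions s_K s_L^*|_{V_i} (|K| = |L|) is a scalar multiple of the identity of V_i. -/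

import Mathlib

noncomputable section

def IsCuntzFamily {H : Type*} [NormedAddCommGroup H] [InnerProductSpace ℂ H]
    [CompleteSpace H] {N : ℕ} (s : Fin N → H →L[ℂ] H) : Prop :=
  (∀ i j, star (s i) * s j = if i = j then (1 : H →L[ℂ] H) else 0) ∧
  ∑ i, s i * star (s i) = 1

def wordOp {H : Type*} [NormedAddCommGroup H] [InnerProductSpace ℂ H]
    [CompleteSpace H] {N : ℕ} (s : Fin N → H →L[ℂ] H) : List (Fin N) → H →L[ℂ] H
  | [] => 1
  | j :: J => s j * wordOp s J

/-- `Ω` is cyclic for the family `s`: the smallest closed subspace containing `Ω` and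
invariant under all `s i` and `(s i)^*` is the whole space. -/
def IsCyclicVec {H : Type*} [NormedAddCommGroup H] [InnerProductSpace ℂ H]
    [CompleteSpace H] {N : ℕ} (s : Fin N → H →L[ℂ] H) (Ω : H) : Prop :=
  ∀ W : Submodule ℂ H, IsClosed (W : Set H) → Ω ∈ W →
    (∀ i, ∀ x ∈ W, s i x ∈ W ∧ star (s i) x ∈ W) → W = ⊤

/-- Closed linear span of `{s_K s_L^* v : |K| = |L|}`. -/
def UHFSpan {H : Type*} [NormedAddCommGroup H] [InnerProductSpace ℂ H]
    [CompleteSpace H] {N : ℕ} (s : Fin N → H →L[ℂ] H) (v : H) : Submodule ℂ H :=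
  (Submodule.span ℂ {x : H | ∃ K L : List (Fin N), K.length = L.length ∧
      x = (wordOp s K * star (wordOp s L)) v}).topologicalClosure

/-- The `P[w]`-condition for an infinite word `w`. -/
def PCond {H : Type*} [NormedAddCommGroup H] [InnerProductSpace ℂ H]
    [CompleteSpace H] {N : ℕ} (s : Fin N → H →L[ℂ] H) (w : ℕ → Fin N) (Ω : H) : Prop :=
  ∀ n : ℕ, (wordOp s (List.ofFn fun k : Fin n => w k) *
      star (wordOp s (List.ofFn fun k : Fin n => w k))) Ω = Ω

namespace CuntzAux

variable {H : Type*} [NormedAddCommGroup H] [InnerProductSpace ℂ H]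
    [CompleteSpace H] {N : ℕ} {s : Fin N → H →L[ℂ] H}

lemma wordOp_nil : wordOp s [] = 1 := rfl
lemma wordOp_cons (a : Fin N) (K : List (Fin N)) :
    wordOp s (a :: K) = s a * wordOp s K := rfl

lemma wordOp_append (K L : List (Fin N)) :
    wordOp s (K ++ L) = wordOp s K * wordOp s L := by
  induction K with
  | nil => simp [wordOp_nil]
  | cons a K ih => simp [wordOp_cons, ih, mul_assoc]

lemma star_cons (a : Fin N) (K : List (Fin N)) :
    star (wordOp s (a :: K)) = star (wordOp s K) * star (s a) := by
  rw [wordOp_cons, star_mul]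

/-- equal-length cancellation -/
lemma star_apply_word (hs : IsCuntzFamily s) :
    ∀ K L : List (Fin N), K.length = L.length → ∀ x : H,
      (star (wordOp s K)) ((wordOp s L) x) = if K = L then x else 0 := by
  intro K
  induction K with
  | nil =>
    intro L hL x
    have : L = [] := by simpa using hL.symm
    subst this; simp [wordOp_nil]
  | cons a K ih =>
    intro L hL x
    cases L with
    | nil => simp at hL
    | cons b L' =>
      have hlen : K.length = L'.length := by simpa using hL
      have h1 : (wordOp s (b :: L')) x = (s b) ((wordOp s L') x) := rfl
      rw [h1, star_cons]
      rw [ContinuousLinearMap.mul_apply]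
      have h2 : (star (s a)) ((s b) ((wordOp s L') x))
          = (star (s a) * s b) ((wordOp s L') x) := rfl
      by_cases hab : a = b
      · subst hab
        rw [h2, hs.1 a a, if_pos rfl, ContinuousLinearMap.one_apply, ih L' hlen x]
        by_cases hKL : K = L' <;> simp [hKL]
      · rw [h2, hs.1 a b, if_neg hab]
        simp [List.cons.injEq, hab]

lemma star_word_mul_self (hs : IsCuntzFamily s) (K : List (Fin N)) :
    star (wordOp s K) * wordOp s K = 1 := by
  ext x
  simp [ContinuousLinearMap.mul_apply, star_apply_word hs K K rfl x]

/-- general product collapse -/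
lemma star_mul_word (hs : IsCuntzFamily s) :
    ∀ L M : List (Fin N),
      star (wordOp s L) * wordOp s M = 0 ∨
      star (wordOp s L) * wordOp s M =
        star (wordOp s (L.drop M.length)) * wordOp s (M.drop L.length) := by
  intro L
  induction L with
  | nil => intro M; right; simp [wordOp_nil]
  | cons a L' ih =>
    intro M
    cases M with
    | nil => right; simp [wordOp_nil]
    | cons b M' =>
      have key : star (wordOp s (a :: L')) * wordOp s (b :: M')
          = star (wordOp s L') * (star (s a) * s b) * wordOp s M' := by
        rw [star_cons, wordOp_cons]; simp only [mul_assoc]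
      rw [key, hs.1 a b]
      by_cases hab : a = b
      · rw [if_pos hab, mul_one]
        rcases ih M' with h | h
        · left; exact h
        · right; rw [h]; simp
      · left; rw [if_neg hab]; simp

lemma inner_word_left (A : List (Fin N)) (x z : H) :
    (inner ℂ ((wordOp s A) x) z : ℂ) = inner ℂ x ((star (wordOp s A)) z) := by
  rw [ContinuousLinearMap.star_eq_adjoint, ContinuousLinearMap.adjoint_inner_right]



variable {l : ℕ}

/-- the `n`-prefix of the periodic word `σ_m J`. -/
def Wrd (hl : 0 < l) (J : Fin l → Fin N) (m n : ℕ) : List (Fin N) :=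
  List.ofFn fun k : Fin n => J ⟨(m + k) % l, Nat.mod_lt _ hl⟩

/-- the cycle of vectors. -/
def EE (s : Fin N → H →L[ℂ] H) (J : Fin l → Fin N) (Ω : H) (m : ℕ) : H :=
  wordOp s ((List.ofFn J).drop (m % l)) Ω

variable (hl : 0 < l) (J : Fin l → Fin N) (Ω : H)

@[simp] lemma Wrd_length (m n : ℕ) : (Wrd hl J m n).length = n := by
  simp [Wrd]

@[simp] lemma Wrd_zero (m : ℕ) : Wrd hl J m 0 = [] := by simp [Wrd]

lemma mod_succ_mod (m : ℕ) : (m % l + 1) % l = (m + 1) % l :=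
  Nat.ModEq.add_right 1 (Nat.mod_modEq m l)

lemma Wrd_succ (m n : ℕ) :
    Wrd hl J m (n + 1) = J ⟨m % l, Nat.mod_lt _ hl⟩ :: Wrd hl J (m + 1) n := by
  have hhead : J ⟨(m + ((0 : Fin (n + 1)) : ℕ)) % l, Nat.mod_lt _ hl⟩
      = J ⟨m % l, Nat.mod_lt _ hl⟩ :=
    congrArg J (Fin.ext (by simp))
  rw [Wrd, List.ofFn_succ, hhead, Wrd]
  exact congrArg _ (congrArg List.ofFn (funext fun i =>
    congrArg J (Fin.ext (by
      show (m + ↑i.succ) % l = (m + 1 + ↑i) % l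
      rw [Fin.val_succ, show m + (↑i + 1) = m + 1 + ↑i by omega]))))

lemma Wrd_append (m p q : ℕ) :
    Wrd hl J m (p + q) = Wrd hl J m p ++ Wrd hl J (m + p) q := by
  induction p generalizing m with
  | zero => simp
  | succ p ih =>
    rw [show p + 1 + q = (p + q) + 1 by omega, Wrd_succ, Wrd_succ, ih (m + 1),
      show m + 1 + p = m + (p + 1) by omega, List.cons_append]

lemma EE_succ (hfix : wordOp s (List.ofFn J) Ω = Ω) (m : ℕ) :
    EE s J Ω m = (s (J ⟨m % l, Nat.mod_lt _ hl⟩)) (EE s J Ω (m + 1)) := by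
  have hm' : m % l < l := Nat.mod_lt _ hl
  have hlen : m % l < (List.ofFn J).length := by simpa using hm'
  have hdrop : (List.ofFn J).drop (m % l)
      = J ⟨m % l, hm'⟩ :: (List.ofFn J).drop (m % l + 1) := by
    rw [List.drop_eq_getElem_cons hlen, List.getElem_ofFn]
  rw [EE, hdrop, wordOp_cons, ContinuousLinearMap.mul_apply]
  congr 1
  rcases Nat.lt_or_ge (m % l + 1) l with h | h
  · rw [EE, ← mod_succ_mod, Nat.mod_eq_of_lt h]
  · have h2 : m % l + 1 = l := by omega
    have h3 : (m + 1) % l = 0 := by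
      rw [← mod_succ_mod, h2, Nat.mod_self]
    have h4 : (List.ofFn J).drop (m % l + 1) = [] :=
      List.drop_eq_nil_of_le (by simp [h2])
    rw [EE, h3, List.drop_zero, hfix, h4, wordOp_nil, ContinuousLinearMap.one_apply]

lemma word_apply_EE (hfix : wordOp s (List.ofFn J) Ω = Ω) :
    ∀ (n m : ℕ), (wordOp s (Wrd hl J m n)) (EE s J Ω (m + n)) = EE s J Ω m := by
  intro n
  induction n with
  | zero => intro m; simp [wordOp_nil]
  | succ n ih =>
    intro m
    rw [Wrd_succ, wordOp_cons, ContinuousLinearMap.mul_apply,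
      show m + (n + 1) = (m + 1) + n by omega, ih (m + 1),
      ← EE_succ hl J Ω hfix m]

lemma star_apply_EE (hs : IsCuntzFamily s) (hfix : wordOp s (List.ofFn J) Ω = Ω) :
    ∀ (K : List (Fin N)) (m : ℕ),
      (star (wordOp s K)) (EE s J Ω m) =
        if K = Wrd hl J m K.length then EE s J Ω (m + K.length) else 0 := by
  intro K
  induction K with
  | nil => intro m; simp [wordOp_nil]
  | cons a K' ih =>
    intro m
    rw [star_cons, ContinuousLinearMap.mul_apply]
    rw [EE_succ hl J Ω hfix m]
    have h2 : (star (s a)) ((s (J ⟨m % l, Nat.mod_lt _ hl⟩)) (EE s J Ω (m + 1)))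
        = (star (s a) * s (J ⟨m % l, Nat.mod_lt _ hl⟩)) (EE s J Ω (m + 1)) := rfl
    rw [h2, hs.1]
    rw [show (a :: K').length = K'.length + 1 from rfl, Wrd_succ]
    by_cases hac : a = J ⟨m % l, Nat.mod_lt _ hl⟩
    · rw [if_pos hac, ContinuousLinearMap.one_apply, ih (m + 1)]
      have harith : m + 1 + K'.length = m + (K'.length + 1) := by omega
      rw [harith]
      by_cases hK : K' = Wrd hl J (m + 1) K'.length
      · have hc : a :: K' = J ⟨m % l, Nat.mod_lt _ hl⟩ :: Wrd hl J (m + 1) K'.length := by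
          rw [hac]; exact congrArg _ hK
        rw [if_pos hK, if_pos hc]
      · rw [if_neg hK, if_neg (by simp [List.cons.injEq, hK])]
    · rw [if_neg hac, ContinuousLinearMap.zero_apply, map_zero,
        if_neg (by simp [List.cons.injEq, hac])]

lemma EE_eq (m : ℕ) :
    EE s J Ω m = (fun i : Fin l => wordOp s ((List.ofFn J).drop i) Ω) ⟨m % l, Nat.mod_lt _ hl⟩ :=
  rfl

include hl in
lemma inner_EE
    (horth : Orthonormal ℂ fun i : Fin l => wordOp s ((List.ofFn J).drop i) Ω)
    (m m' : ℕ) :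
    (inner ℂ (EE s J Ω m) (EE s J Ω m') : ℂ) = if m % l = m' % l then 1 else 0 := by
  rw [EE_eq hl J Ω m, EE_eq hl J Ω m']
  rw [orthonormal_iff_ite.mp horth]
  by_cases h : m % l = m' % l
  · rw [if_pos h, if_pos (Fin.ext h)]
  · rw [if_neg h, if_neg (fun hc => h (congrArg Fin.val hc))]

include hl in
lemma word_EE_pad (hfix : wordOp s (List.ofFn J) Ω = Ω) (K : List (Fin N)) (a n' : ℕ) :
    (wordOp s K) (EE s J Ω a) = (wordOp s (K ++ Wrd hl J a n')) (EE s J Ω (a + n')) := by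
  rw [wordOp_append, ContinuousLinearMap.mul_apply, word_apply_EE hl J Ω hfix]

include hl in
lemma inner_gen_zero (hs : IsCuntzFamily s) (hfix : wordOp s (List.ofFn J) Ω = Ω)
    (horth : Orthonormal ℂ fun i : Fin l => wordOp s ((List.ofFn J).drop i) Ω)
    {K L K' L' : List (Fin N)}
    (hK : K.length = L.length) (hK' : K'.length = L'.length) {a b : ℕ}
    (hab : a % l ≠ b % l) :
    (inner ℂ ((wordOp s K * star (wordOp s L)) (EE s J Ω a))
      ((wordOp s K' * star (wordOp s L')) (EE s J Ω b)) : ℂ) = 0 := by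
  rw [ContinuousLinearMap.mul_apply, ContinuousLinearMap.mul_apply,
    star_apply_EE hl J Ω hs hfix, star_apply_EE hl J Ω hs hfix]
  by_cases h1 : L = Wrd hl J a L.length
  swap
  · rw [if_neg h1]; simp
  by_cases h2 : L' = Wrd hl J b L'.length
  swap
  · rw [if_neg h2]; simp
  rw [if_pos h1, if_pos h2]
  rw [word_EE_pad hl J Ω hfix K (a + L.length) L'.length,
      word_EE_pad hl J Ω hfix K' (b + L'.length) K.length]
  rw [inner_word_left]
  rw [star_apply_word hs _ _ (by simp only [List.length_append, Wrd_length]; omega)]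
  by_cases h3 : K ++ Wrd hl J (a + L.length) L'.length
      = K' ++ Wrd hl J (b + L'.length) K.length
  swap
  · rw [if_neg h3, inner_zero_right]
  rw [if_pos h3, inner_EE hl J Ω horth]
  rw [if_neg]
  intro hcon
  apply hab
  have hmod : a + (L.length + L'.length) ≡ b + (L.length + L'.length) [MOD l] := by
    have e1 : a + L.length + L'.length = a + (L.length + L'.length) := by omega
    have e2 : b + L'.length + K.length = b + (L.length + L'.length) := by omega
    rw [Nat.ModEq, ← e1, ← e2]
    exact hcon
  exact Nat.ModEq.add_right_cancel' _ hmod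

include hl in
lemma inner_E_gen (hs : IsCuntzFamily s) (hfix : wordOp s (List.ofFn J) Ω = Ω)
    (horth : Orthonormal ℂ fun i : Fin l => wordOp s ((List.ofFn J).drop i) Ω)
    {K L : List (Fin N)} (hK : K.length = L.length) (a : ℕ) :
    (inner ℂ (EE s J Ω a) ((wordOp s K * star (wordOp s L)) (EE s J Ω a)) : ℂ)
      = if K = Wrd hl J a K.length ∧ L = Wrd hl J a L.length then 1 else 0 := by
  rw [ContinuousLinearMap.mul_apply, star_apply_EE hl J Ω hs hfix]
  by_cases h1 : L = Wrd hl J a L.length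
  swap
  · rw [if_neg h1, map_zero, inner_zero_right, if_neg (by tauto)]
  rw [if_pos h1]
  conv_lhs => rw [show EE s J Ω a
    = (wordOp s (Wrd hl J a L.length)) (EE s J Ω (a + L.length)) from
      (word_apply_EE hl J Ω hfix _ _).symm]
  rw [inner_word_left, star_apply_word hs _ _ (by simp [hK])]
  by_cases h2 : Wrd hl J a L.length = K
  · rw [if_pos h2, inner_EE hl J Ω horth, if_pos rfl,
      if_pos ⟨by rw [hK]; exact h2.symm, h1⟩]
  · rw [if_neg h2, inner_zero_right,
      if_neg (by intro hc; exact h2 (by rw [← hK]; exact hc.1.symm))]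

include hl in
lemma proj_apply_gen (hs : IsCuntzFamily s) (hfix : wordOp s (List.ofFn J) Ω = Ω)
    {K L : List (Fin N)} (hK : K.length = L.length)
    {n : ℕ} (hn : K.length ≤ n) (a : ℕ) :
    (wordOp s (Wrd hl J a n) * star (wordOp s (Wrd hl J a n)))
        ((wordOp s K * star (wordOp s L)) (EE s J Ω a))
      = (if K = Wrd hl J a K.length ∧ L = Wrd hl J a L.length then (1:ℂ) else 0)
          • EE s J Ω a := by
  rw [ContinuousLinearMap.mul_apply, ContinuousLinearMap.mul_apply,
    star_apply_EE hl J Ω hs hfix]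
  by_cases h1 : L = Wrd hl J a L.length
  swap
  · rw [if_neg h1, map_zero, map_zero, map_zero, if_neg (by tauto), zero_smul]
  rw [if_pos h1, show a + L.length = a + K.length by omega]
  have hsplit : Wrd hl J a n
      = Wrd hl J a K.length ++ Wrd hl J (a + K.length) (n - K.length) := by
    rw [← Wrd_append]; congr 1; omega
  rw [hsplit, wordOp_append, star_mul]
  simp only [ContinuousLinearMap.mul_apply]
  rw [star_apply_word hs _ _ (by simp)]
  by_cases h2 : Wrd hl J a K.length = K
  swap
  · rw [if_neg h2, map_zero, map_zero, map_zero, if_neg (fun hc => h2 hc.1.symm), zero_smul]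
  rw [if_pos h2, star_apply_EE hl J Ω hs hfix, Wrd_length, if_pos rfl,
    word_apply_EE hl J Ω hfix, word_apply_EE hl J Ω hfix,
    if_pos ⟨h2.symm, h1⟩, one_smul]

lemma norm_word_apply (hs : IsCuntzFamily s) (W : List (Fin N)) (x : H) :
    ‖(wordOp s W) x‖ = ‖x‖ := by
  have h1 : (inner ℂ ((wordOp s W) x) ((wordOp s W) x) : ℂ) = inner ℂ x x := by
    rw [inner_word_left, star_apply_word hs W W rfl, if_pos rfl]
  rw [@norm_eq_sqrt_re_inner ℂ, @norm_eq_sqrt_re_inner ℂ _ _ _ _ x, h1]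

lemma norm_proj_apply_le (hs : IsCuntzFamily s) (W : List (Fin N)) (x : H) :
    ‖(wordOp s W * star (wordOp s W)) x‖ ≤ ‖x‖ := by
  rw [ContinuousLinearMap.mul_apply, norm_word_apply hs]
  have hb : ‖wordOp s W‖ ≤ 1 :=
    ContinuousLinearMap.opNorm_le_bound _ zero_le_one
      (fun y => by rw [norm_word_apply hs, one_mul])
  calc ‖(star (wordOp s W)) x‖ ≤ ‖star (wordOp s W)‖ * ‖x‖ :=
        ContinuousLinearMap.le_opNorm _ _
    _ ≤ 1 * ‖x‖ := by
        apply mul_le_mul_of_nonneg_right _ (norm_nonneg x)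
        rw [norm_star]; exact hb
    _ = ‖x‖ := one_mul _

lemma balanced_mul (hs : IsCuntzFamily s) {K L M P : List (Fin N)}
    (h1 : K.length = L.length) (h2 : M.length = P.length) :
    (∃ A B : List (Fin N), A.length = B.length ∧
      (wordOp s K * star (wordOp s L)) * (wordOp s M * star (wordOp s P))
        = wordOp s A * star (wordOp s B)) ∨
    (wordOp s K * star (wordOp s L)) * (wordOp s M * star (wordOp s P)) = 0 := by
  have hassoc : (wordOp s K * star (wordOp s L)) * (wordOp s M * star (wordOp s P))
      = wordOp s K * ((star (wordOp s L) * wordOp s M) * star (wordOp s P)) := by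
    simp only [mul_assoc]
  rcases star_mul_word hs L M with h | h
  · right; rw [hassoc, h, zero_mul, mul_zero]
  · left
    rcases Nat.le_total L.length M.length with hle | hle
    · refine ⟨K ++ M.drop L.length, P, ?_, ?_⟩
      · simp only [List.length_append, List.length_drop]; omega
      · have hLd : L.drop M.length = [] := List.drop_eq_nil_of_le (by omega)
        rw [hassoc, h, hLd, wordOp_nil, star_one, one_mul, wordOp_append]
        simp only [mul_assoc]
    · refine ⟨K, P ++ L.drop M.length, ?_, ?_⟩
      · simp only [List.length_append, List.length_drop]; omega
      · have hMd : M.drop L.length = [] := List.drop_eq_nil_of_le (by omega)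
        rw [hassoc, h, hMd, wordOp_nil, mul_one, wordOp_append, star_mul]

end CuntzAux

open CuntzAux in
theorem cycle_restriction_branching
    {H : Type*} [NormedAddCommGroup H] [InnerProductSpace ℂ H] [CompleteSpace H]
    {N l : ℕ} (hl : 0 < l) (s : Fin N → H →L[ℂ] H) (hs : IsCuntzFamily s)
    (J : Fin l → Fin N) (Ω : H) (hΩ : ‖Ω‖ = 1) (hcyc : IsCyclicVec s Ω)
    (hfix : wordOp s (List.ofFn J) Ω = Ω)
    (horth : Orthonormal ℂ fun i : Fin l => wordOp s ((List.ofFn J).drop i) Ω) :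
    -- pairwise orthogonality of the `V_i`
    (∀ i j : Fin l, i ≠ j →
      ∀ x ∈ UHFSpan s (wordOp s ((List.ofFn J).drop i) Ω),
      ∀ y ∈ UHFSpan s (wordOp s ((List.ofFn J).drop j) Ω),
        (inner ℂ x y : ℂ) = 0)
    -- `H = V_1 ⊕ ⋯ ⊕ V_l`
    ∧ (⨆ i : Fin l, UHFSpan s (wordOp s ((List.ofFn J).drop i) Ω)) = ⊤
    -- invariance of each `V_i` under all `s_K s_L^*` with `|K| = |L|`
    ∧ (∀ i : Fin l, ∀ K L : List (Fin N), K.length = L.length →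
        ∀ x ∈ UHFSpan s (wordOp s ((List.ofFn J).drop i) Ω),
          (wordOp s K * star (wordOp s L)) x ∈
            UHFSpan s (wordOp s ((List.ofFn J).drop i) Ω))
    -- `e_i` satisfies the `P[σ_i J]`-condition
    ∧ (∀ i : Fin l, PCond s (fun m => J ⟨(i.val + m) % l, Nat.mod_lt _ hl⟩)
        (wordOp s ((List.ofFn J).drop i) Ω))
    -- irreducibility of each `V_i`
    ∧ (∀ i : Fin l,
        ∀ T : ↥(UHFSpan s (wordOp s ((List.ofFn J).drop i) Ω)) →L[ℂ]
              ↥(UHFSpan s (wordOp s ((List.ofFn J).drop i) Ω)),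
        (∀ K L : List (Fin N), K.length = L.length →
          ∀ x y : ↥(UHFSpan s (wordOp s ((List.ofFn J).drop i) Ω)),
            (y : H) = (wordOp s K * star (wordOp s L)) (x : H) →
            (T y : H) = (wordOp s K * star (wordOp s L)) ((T x : H))) →
        ∃ c : ℂ, ∀ x, T x = c • x) := by
  classical
  have hEe : ∀ i : Fin l, EE s J Ω i.val = wordOp s ((List.ofFn J).drop (i : ℕ)) Ω :=
    fun i => by rw [EE, Nat.mod_eq_of_lt i.isLt]
  have hVclosed : ∀ v : H, IsClosed ((UHFSpan s v : Submodule ℂ H) : Set H) :=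
    fun v => Submodule.isClosed_topologicalClosure _
  have hmemS : ∀ (v : H) (K L : List (Fin N)), K.length = L.length →
      (wordOp s K * star (wordOp s L)) v ∈ UHFSpan s v := fun v K L h =>
    Submodule.le_topologicalClosure _ (Submodule.subset_span ⟨K, L, h, rfl⟩)
  have hself : ∀ v : H, v ∈ UHFSpan s v := fun v => by
    have h := hmemS v [] [] rfl
    simpa only [wordOp_nil, star_one, mul_one, ContinuousLinearMap.one_apply] using h
  -- orthogonality of the subspaces
  have horthV : ∀ i j : Fin l, i ≠ j →
      UHFSpan s (wordOp s ((List.ofFn J).drop (j : ℕ)) Ω)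
        ≤ (UHFSpan s (wordOp s ((List.ofFn J).drop (i : ℕ)) Ω))ᗮ := by
    intro i j hij
    refine Submodule.topologicalClosure_minimal _ ?_ (Submodule.isClosed_orthogonal _)
    rw [Submodule.span_le]
    rintro y ⟨K', L', hKL', rfl⟩
    rw [SetLike.mem_coe, Submodule.mem_orthogonal]
    suffices hsuff : UHFSpan s (wordOp s ((List.ofFn J).drop (i : ℕ)) Ω)
        ≤ LinearMap.ker (innerSL ℂ
          ((wordOp s K' * star (wordOp s L')) (wordOp s ((List.ofFn J).drop (j : ℕ)) Ω))).toLinearMap by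
      intro u hu
      rw [inner_eq_zero_symm]
      exact LinearMap.mem_ker.mp (hsuff hu)
    refine Submodule.topologicalClosure_minimal _ ?_ (ContinuousLinearMap.isClosed_ker _)
    rw [Submodule.span_le]
    rintro x ⟨K, L, hKL, rfl⟩
    rw [SetLike.mem_coe, LinearMap.mem_ker]
    have h0 : (inner ℂ ((wordOp s K * star (wordOp s L)) (EE s J Ω i.val))
        ((wordOp s K' * star (wordOp s L')) (EE s J Ω j.val)) : ℂ) = 0 := by
      refine inner_gen_zero hl J Ω hs hfix horth hKL hKL' ?_
      rw [Nat.mod_eq_of_lt i.isLt, Nat.mod_eq_of_lt j.isLt]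
      exact fun hc => hij (Fin.ext hc)
    rw [hEe i, hEe j] at h0
    exact inner_eq_zero_symm.mp h0
  have part1 : ∀ i j : Fin l, i ≠ j →
      ∀ x ∈ UHFSpan s (wordOp s ((List.ofFn J).drop (i : ℕ)) Ω),
      ∀ y ∈ UHFSpan s (wordOp s ((List.ofFn J).drop (j : ℕ)) Ω),
        (inner ℂ x y : ℂ) = 0 := by
    intro i j hij x hx y hy
    exact (Submodule.mem_orthogonal _ _).mp (horthV i j hij hy) x hx
  -- invariance
  have hinv : ∀ (v : H) (K L : List (Fin N)), K.length = L.length →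
      ∀ x ∈ UHFSpan s v, (wordOp s K * star (wordOp s L)) x ∈ UHFSpan s v := by
    intro v K L hKL x hx
    have hcomap : UHFSpan s v ≤
        (UHFSpan s v).comap (wordOp s K * star (wordOp s L) : H →L[ℂ] H).toLinearMap := by
      refine Submodule.topologicalClosure_minimal _ ?_
        (IsClosed.preimage (ContinuousLinearMap.continuous _) (hVclosed v))
      · rw [Submodule.span_le]
        rintro y ⟨M, P, hMP, rfl⟩
        rw [SetLike.mem_coe, Submodule.mem_comap, ContinuousLinearMap.coe_coe]
        rw [show (wordOp s K * star (wordOp s L) : H →L[ℂ] H)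
            ((wordOp s M * star (wordOp s P)) v)
            = ((wordOp s K * star (wordOp s L)) * (wordOp s M * star (wordOp s P))) v from rfl]
        rcases balanced_mul hs hKL hMP with ⟨A, B, hAB, heq⟩ | heq
        · rw [heq]; exact hmemS v A B hAB
        · rw [heq]; simp only [ContinuousLinearMap.zero_apply]; exact zero_mem _
    exact hcomap hx
  have part3 : ∀ i : Fin l, ∀ K L : List (Fin N), K.length = L.length →
      ∀ x ∈ UHFSpan s (wordOp s ((List.ofFn J).drop (i : ℕ)) Ω),
        (wordOp s K * star (wordOp s L)) x ∈
          UHFSpan s (wordOp s ((List.ofFn J).drop (i : ℕ)) Ω) :=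
    fun i K L hKL x hx => hinv _ K L hKL x hx
  -- the P-condition
  have part4 : ∀ i : Fin l, PCond s (fun m => J ⟨(i.val + m) % l, Nat.mod_lt _ hl⟩)
      (wordOp s ((List.ofFn J).drop (i : ℕ)) Ω) := by
    intro i n
    show (wordOp s (Wrd hl J i.val n) * star (wordOp s (Wrd hl J i.val n)))
        (wordOp s ((List.ofFn J).drop (i : ℕ)) Ω)
      = wordOp s ((List.ofFn J).drop (i : ℕ)) Ω
    rw [← hEe i, ContinuousLinearMap.mul_apply, star_apply_EE hl J Ω hs hfix,
      if_pos (by rw [Wrd_length]), Wrd_length, word_apply_EE hl J Ω hfix]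
  refine ⟨part1, ?_, part3, part4, ?_⟩
  · -- H = V_1 ⊕ ... ⊕ V_l
    set Wfull : Submodule ℂ H :=
      ⨆ i : Fin l, UHFSpan s (wordOp s ((List.ofFn J).drop (i : ℕ)) Ω) with hWfull
    have hVleW : ∀ m : ℕ, UHFSpan s (EE s J Ω m) ≤ Wfull := by
      intro m
      have he : UHFSpan s (EE s J Ω m) = UHFSpan s
          (wordOp s ((List.ofFn J).drop ((⟨m % l, Nat.mod_lt _ hl⟩ : Fin l) : ℕ)) Ω) := rfl
      rw [he, hWfull]
      exact le_iSup (fun i : Fin l =>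
        UHFSpan s (wordOp s ((List.ofFn J).drop (i : ℕ)) Ω)) ⟨m % l, Nat.mod_lt _ hl⟩
    -- s_a maps V(m) into V(m + l - 1)
    have claimA : ∀ (a : Fin N) (m : ℕ), ∀ x ∈ UHFSpan s (EE s J Ω m), s a x ∈ Wfull := by
      intro a m x hx
      suffices hh : UHFSpan s (EE s J Ω m)
          ≤ (UHFSpan s (EE s J Ω (m + l - 1))).comap (s a).toLinearMap from hVleW _ (hh hx)
      refine Submodule.topologicalClosure_minimal _ ?_
        (IsClosed.preimage (ContinuousLinearMap.continuous _) (hVclosed _))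
      rw [Submodule.span_le]
      rintro y ⟨K, L, hKL, rfl⟩
      rw [SetLike.mem_coe, Submodule.mem_comap, ContinuousLinearMap.coe_coe]
      have hEml : EE s J Ω (m + l - 1 + 1) = EE s J Ω m := by
        rw [show m + l - 1 + 1 = m + l by omega, EE, EE, Nat.add_mod_right]
      have h1 : (star (s (J ⟨(m + l - 1) % l, Nat.mod_lt _ hl⟩))) (EE s J Ω (m + l - 1))
          = EE s J Ω m := by
        rw [EE_succ hl J Ω hfix (m + l - 1)]
        rw [show (star (s (J ⟨(m + l - 1) % l, Nat.mod_lt _ hl⟩)))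
            ((s (J ⟨(m + l - 1) % l, Nat.mod_lt _ hl⟩)) (EE s J Ω (m + l - 1 + 1)))
          = (star (s (J ⟨(m + l - 1) % l, Nat.mod_lt _ hl⟩))
              * s (J ⟨(m + l - 1) % l, Nat.mod_lt _ hl⟩)) (EE s J Ω (m + l - 1 + 1)) from rfl,
          hs.1, if_pos rfl, ContinuousLinearMap.one_apply, hEml]
      have hkey : (wordOp s (a :: K)
            * star (wordOp s (J ⟨(m + l - 1) % l, Nat.mod_lt _ hl⟩ :: L)))
            (EE s J Ω (m + l - 1))
          = (s a) ((wordOp s K * star (wordOp s L)) (EE s J Ω m)) := by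
        rw [ContinuousLinearMap.mul_apply, star_cons, ContinuousLinearMap.mul_apply, h1,
          wordOp_cons, ContinuousLinearMap.mul_apply, ContinuousLinearMap.mul_apply]
      rw [← hkey]
      exact hmemS _ _ _ (by simp [hKL])
    -- (s_a)^* maps V(m) into V(m+1)
    have claimB : ∀ (a : Fin N) (m : ℕ), ∀ x ∈ UHFSpan s (EE s J Ω m),
        (star (s a)) x ∈ Wfull := by
      intro a m x hx
      suffices hh : UHFSpan s (EE s J Ω m)
          ≤ (UHFSpan s (EE s J Ω (m + 1))).comap (star (s a)).toLinearMap from hVleW _ (hh hx)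
      refine Submodule.topologicalClosure_minimal _ ?_
        (IsClosed.preimage (ContinuousLinearMap.continuous _) (hVclosed _))
      rw [Submodule.span_le]
      rintro y ⟨K, L, hKL, rfl⟩
      rw [SetLike.mem_coe, Submodule.mem_comap, ContinuousLinearMap.coe_coe]
      cases K with
      | nil =>
        have hL : L = [] := by
          cases L with
          | nil => rfl
          | cons b L' => simp at hKL
        subst hL
        rw [show (wordOp s ([] : List (Fin N)) * star (wordOp s ([] : List (Fin N))))
            (EE s J Ω m) = EE s J Ω m by
          simp [wordOp_nil]]
        rw [EE_succ hl J Ω hfix m]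
        rw [show (star (s a)) ((s (J ⟨m % l, Nat.mod_lt _ hl⟩)) (EE s J Ω (m + 1)))
          = (star (s a) * s (J ⟨m % l, Nat.mod_lt _ hl⟩)) (EE s J Ω (m + 1)) from rfl, hs.1]
        by_cases hac : a = J ⟨m % l, Nat.mod_lt _ hl⟩
        · rw [if_pos hac, ContinuousLinearMap.one_apply]
          exact hself _
        · rw [if_neg hac, ContinuousLinearMap.zero_apply]
          exact zero_mem _
      | cons b K' =>
        rw [show (star (s a)) ((wordOp s (b :: K') * star (wordOp s L)) (EE s J Ω m))
          = (star (s a) * s b) ((wordOp s K' * star (wordOp s L)) (EE s J Ω m)) from rfl, hs.1]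
        by_cases hab : a = b
        swap
        · rw [if_neg hab, ContinuousLinearMap.zero_apply]; exact zero_mem _
        rw [if_pos hab, ContinuousLinearMap.one_apply, ContinuousLinearMap.mul_apply,
          star_apply_EE hl J Ω hs hfix]
        by_cases hL : L = Wrd hl J m L.length
        swap
        · rw [if_neg hL, map_zero]; exact zero_mem _
        rw [if_pos hL]
        have hLpos : 1 ≤ L.length := by
          rw [← hKL]; simp
        have hrep : EE s J Ω (m + L.length)
            = (star (wordOp s (Wrd hl J (m + 1) (L.length - 1)))) (EE s J Ω (m + 1)) := by
          rw [star_apply_EE hl J Ω hs hfix, if_pos (by rw [Wrd_length]), Wrd_length,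
            show m + 1 + (L.length - 1) = m + L.length by omega]
        rw [hrep, show (wordOp s K') ((star (wordOp s (Wrd hl J (m + 1) (L.length - 1))))
            (EE s J Ω (m + 1)))
          = (wordOp s K' * star (wordOp s (Wrd hl J (m + 1) (L.length - 1))))
            (EE s J Ω (m + 1)) from rfl]
        refine hmemS _ _ _ ?_
        rw [Wrd_length]
        simp only [List.length_cons] at hKL
        omega
    have hWinv : ∀ (a : Fin N), ∀ x ∈ Wfull, s a x ∈ Wfull ∧ (star (s a)) x ∈ Wfull := by
      intro a x hx
      refine Submodule.iSup_induction' _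
        (motive := fun x _ => s a x ∈ Wfull ∧ (star (s a)) x ∈ Wfull) ?_ ?_ ?_ hx
      · intro i x hxi
        rw [← hEe i] at hxi
        exact ⟨claimA a i.val x hxi, claimB a i.val x hxi⟩
      · simp only [map_zero]
        exact ⟨zero_mem _, zero_mem _⟩
      · intro x y _ _ hx hy
        simp only [map_add]
        exact ⟨add_mem hx.1 hy.1, add_mem hx.2 hy.2⟩
    have hΩW : Ω ∈ Wfull := by
      have h2 : wordOp s (List.ofFn J) Ω
          ∈ UHFSpan s (wordOp s (List.ofFn J) Ω) := hself _
      nth_rewrite 2 [hfix] at h2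
      have h4 : Ω ∈ UHFSpan s (EE s J Ω 0) := by
        rw [show EE s J Ω 0 = wordOp s ((List.ofFn J).drop (0 % l)) Ω from rfl, Nat.zero_mod]
        exact h2
      exact hVleW 0 h4
    have htop : Wfull.topologicalClosure = ⊤ := by
      refine hcyc _ (Submodule.isClosed_topologicalClosure _)
        (Submodule.le_topologicalClosure _ hΩW) ?_
      intro a x hx
      constructor
      · refine Submodule.topologicalClosure_minimal _
          (fun y hy => Submodule.mem_comap.mpr
            (Submodule.le_topologicalClosure _ ((hWinv a y hy).1)))
          (IsClosed.preimage (ContinuousLinearMap.continuous (s a))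
            (Submodule.isClosed_topologicalClosure _)) hx
      · refine Submodule.topologicalClosure_minimal _
          (fun y hy => Submodule.mem_comap.mpr
            (Submodule.le_topologicalClosure _ ((hWinv a y hy).2)))
          (IsClosed.preimage (ContinuousLinearMap.continuous (star (s a)))
            (Submodule.isClosed_topologicalClosure _)) hx
    -- the orthogonal projections
    have hVcomplete : ∀ i : Fin l,
        CompleteSpace (UHFSpan s (wordOp s ((List.ofFn J).drop (i : ℕ)) Ω)) :=
      fun i => (hVclosed _).completeSpace_coe
    let P : Fin l → (H →L[ℂ] H) := fun i =>
      letI := hVcomplete i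
      (UHFSpan s (wordOp s ((List.ofFn J).drop (i : ℕ)) Ω)).subtypeL.comp
        (Submodule.orthogonalProjectionOnto (UHFSpan s (wordOp s ((List.ofFn J).drop (i : ℕ)) Ω)))
    have hPmem : ∀ (i : Fin l) (x : H),
        P i x ∈ UHFSpan s (wordOp s ((List.ofFn J).drop (i : ℕ)) Ω) := by
      intro i x
      letI := hVcomplete i
      exact (Submodule.orthogonalProjectionOnto _ x).2
    have hPeq : ∀ (i : Fin l) (x : H),
        x ∈ UHFSpan s (wordOp s ((List.ofFn J).drop (i : ℕ)) Ω) → P i x = x := by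
      intro i x hx
      letI := hVcomplete i
      exact Submodule.starProjection_eq_self_iff.mpr hx
    have hPzero : ∀ (i j : Fin l) (x : H), j ≠ i →
        x ∈ UHFSpan s (wordOp s ((List.ofFn J).drop (i : ℕ)) Ω) → P j x = 0 := by
      intro i j x hji hx
      letI := hVcomplete j
      have hxo : x ∈ (UHFSpan s (wordOp s ((List.ofFn J).drop (j : ℕ)) Ω))ᗮ :=
        horthV j i hji hx
      show (UHFSpan s (wordOp s ((List.ofFn J).drop (j : ℕ)) Ω)).subtypeL
        (Submodule.orthogonalProjectionOnto _ x) = 0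
      rw [Submodule.orthogonalProjectionOnto_apply_of_mem_orthogonal hxo]
      rfl
    set Q : H →L[ℂ] H := ∑ i, P i with hQ
    have hQ1 : ∀ x ∈ Wfull, Q x = x := by
      intro x hx
      refine Submodule.iSup_induction' _ (motive := fun x _ => Q x = x) ?_ (map_zero Q) ?_ hx
      · intro i x hxi
        rw [hQ, ContinuousLinearMap.sum_apply]
        rw [Finset.sum_eq_single i (fun j _ hj => hPzero i j x hj hxi)
          (fun h => absurd (Finset.mem_univ i) h)]
        exact hPeq i x hxi
      · intro x y _ _ hx hy
        rw [map_add, hx, hy]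
    have hQ2 : ∀ x : H, Q x ∈ Wfull := by
      intro x
      rw [hQ, ContinuousLinearMap.sum_apply]
      refine Submodule.sum_mem _ fun i _ => ?_
      exact le_iSup (fun i : Fin l =>
        UHFSpan s (wordOp s ((List.ofFn J).drop (i : ℕ)) Ω)) i (hPmem i x)
    have hQ3 : Wfull.topologicalClosure ≤ LinearMap.ker ((Q - 1 : H →L[ℂ] H)).toLinearMap := by
      refine Submodule.topologicalClosure_minimal _ ?_ (ContinuousLinearMap.isClosed_ker _)
      intro y hy
      rw [LinearMap.mem_ker, ContinuousLinearMap.coe_coe, ContinuousLinearMap.sub_apply,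
        ContinuousLinearMap.one_apply, hQ1 y hy, sub_self]
    rw [eq_top_iff]
    intro x _
    have hxk : x ∈ LinearMap.ker ((Q - 1 : H →L[ℂ] H)).toLinearMap := hQ3 (htop ▸ Submodule.mem_top)
    have hx2 : Q x = x := by
      have := LinearMap.mem_ker.mp hxk
      rw [ContinuousLinearMap.coe_coe, ContinuousLinearMap.sub_apply, ContinuousLinearMap.one_apply, sub_eq_zero] at this
      exact this
    rw [← hx2]
    exact hQ2 x
  · -- irreducibility
    intro i T hT
    have hvV : (wordOp s ((List.ofFn J).drop (i : ℕ)) Ω) ∈ UHFSpan s (wordOp s ((List.ofFn J).drop (i : ℕ)) Ω) := hself _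
    set ehat : ↥(UHFSpan s (wordOp s ((List.ofFn J).drop (i : ℕ)) Ω)) := ⟨(wordOp s ((List.ofFn J).drop (i : ℕ)) Ω), hvV⟩ with hehat
    set c : ℂ := inner ℂ (wordOp s ((List.ofFn J).drop (i : ℕ)) Ω) ((T ehat : H)) with hc
    have hEv : EE s J Ω i.val = (wordOp s ((List.ofFn J).drop (i : ℕ)) Ω) := hEe i
    have hfixn : ∀ n : ℕ, (wordOp s (Wrd hl J i.val n) * star (wordOp s (Wrd hl J i.val n)))
        (wordOp s ((List.ofFn J).drop (i : ℕ)) Ω) = (wordOp s ((List.ofFn J).drop (i : ℕ)) Ω) := part4 i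
    have hTfix : ∀ n : ℕ, (wordOp s (Wrd hl J i.val n) * star (wordOp s (Wrd hl J i.val n)))
        ((T ehat : H)) = (T ehat : H) := fun n =>
      (hT (Wrd hl J i.val n) (Wrd hl J i.val n) rfl ehat ehat (hfixn n).symm).symm
    have hTe : (T ehat : H) = c • (wordOp s ((List.ofFn J).drop (i : ℕ)) Ω) := by
      have humem : (T ehat : H) ∈ closure ((Submodule.span ℂ {x : H | ∃ K L : List (Fin N),
          K.length = L.length ∧ x = (wordOp s K * star (wordOp s L)) (wordOp s ((List.ofFn J).drop (i : ℕ)) Ω)} : Submodule ℂ H)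
            : Set H) := by
        have h : (T ehat : H) ∈ (Submodule.span ℂ {x : H | ∃ K L : List (Fin N),
            K.length = L.length ∧ x = (wordOp s K * star (wordOp s L)) (wordOp s ((List.ofFn J).drop (i : ℕ)) Ω)}).topologicalClosure :=
          (T ehat).2
        rwa [← SetLike.mem_coe, Submodule.topologicalClosure_coe] at h
      have happrox : ∀ w ∈ Submodule.span ℂ {x : H | ∃ K L : List (Fin N),
          K.length = L.length ∧ x = (wordOp s K * star (wordOp s L)) (wordOp s ((List.ofFn J).drop (i : ℕ)) Ω)},
          ∃ n₀ : ℕ, ∀ n ≥ n₀,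
            (wordOp s (Wrd hl J i.val n) * star (wordOp s (Wrd hl J i.val n))) w
              = (inner ℂ (wordOp s ((List.ofFn J).drop (i : ℕ)) Ω) w : ℂ) • (wordOp s ((List.ofFn J).drop (i : ℕ)) Ω) := by
        intro w hw
        induction hw using Submodule.span_induction with
        | mem x hxS =>
          obtain ⟨K, L, hKL, rfl⟩ := hxS
          refine ⟨K.length, fun n hn => ?_⟩
          rw [← hEv, proj_apply_gen hl J Ω hs hfix hKL hn i.val,
            inner_E_gen hl J Ω hs hfix horth hKL i.val]
        | zero => exact ⟨0, fun n _ => by simp⟩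
        | add x y hx hy ihx ihy =>
          obtain ⟨n1, h1⟩ := ihx
          obtain ⟨n2, h2⟩ := ihy
          refine ⟨max n1 n2, fun n hn => ?_⟩
          rw [map_add, h1 n (le_trans (le_max_left _ _) hn),
            h2 n (le_trans (le_max_right _ _) hn), inner_add_right, add_smul]
        | smul a x hx ihx =>
          obtain ⟨n1, h1⟩ := ihx
          refine ⟨n1, fun n hn => ?_⟩
          rw [map_smul, h1 n hn, inner_smul_right, smul_smul]
      have hvnorm : ‖(wordOp s ((List.ofFn J).drop (i : ℕ)) Ω)‖ = 1 := horth.1 i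
      have hnorm : ∀ ε : ℝ, 0 < ε → ‖(T ehat : H) - c • (wordOp s ((List.ofFn J).drop (i : ℕ)) Ω)‖ ≤ 0 + 2 * ε := by
        intro ε hε
        obtain ⟨w, hwS, hwd⟩ := Metric.mem_closure_iff.mp humem ε hε
        obtain ⟨n₀, hn₀⟩ := happrox w hwS
        have hdist : ‖(T ehat : H) - w‖ < ε := by
          rw [← dist_eq_norm]; exact hwd
        have h1 : ‖(T ehat : H) - (inner ℂ (wordOp s ((List.ofFn J).drop (i : ℕ)) Ω) w : ℂ) • (wordOp s ((List.ofFn J).drop (i : ℕ)) Ω)‖ ≤ ‖(T ehat : H) - w‖ := by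
          rw [show (T ehat : H) - (inner ℂ (wordOp s ((List.ofFn J).drop (i : ℕ)) Ω) w : ℂ) • (wordOp s ((List.ofFn J).drop (i : ℕ)) Ω)
              = (wordOp s (Wrd hl J i.val n₀) * star (wordOp s (Wrd hl J i.val n₀)))
                ((T ehat : H) - w) from by rw [map_sub, hTfix n₀, hn₀ n₀ le_rfl]]
          exact norm_proj_apply_le hs _ _
        have h3 : ‖((inner ℂ (wordOp s ((List.ofFn J).drop (i : ℕ)) Ω) w : ℂ) - c) • (wordOp s ((List.ofFn J).drop (i : ℕ)) Ω)‖ ≤ ‖(T ehat : H) - w‖ := by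
          rw [norm_smul, hvnorm, mul_one, hc, ← inner_sub_right]
          calc ‖(inner ℂ (wordOp s ((List.ofFn J).drop (i : ℕ)) Ω) (w - (T ehat : H)) : ℂ)‖
              ≤ ‖(wordOp s ((List.ofFn J).drop (i : ℕ)) Ω)‖ * ‖w - (T ehat : H)‖ := norm_inner_le_norm _ _
            _ = ‖(T ehat : H) - w‖ := by rw [hvnorm, one_mul, norm_sub_rev]
        calc ‖(T ehat : H) - c • (wordOp s ((List.ofFn J).drop (i : ℕ)) Ω)‖
            ≤ ‖(T ehat : H) - (inner ℂ (wordOp s ((List.ofFn J).drop (i : ℕ)) Ω) w : ℂ) • (wordOp s ((List.ofFn J).drop (i : ℕ)) Ω)‖ + ‖((inner ℂ (wordOp s ((List.ofFn J).drop (i : ℕ)) Ω) w : ℂ) - c) • (wordOp s ((List.ofFn J).drop (i : ℕ)) Ω)‖ := by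
              rw [show (T ehat : H) - c • (wordOp s ((List.ofFn J).drop (i : ℕ)) Ω)
                  = ((T ehat : H) - (inner ℂ (wordOp s ((List.ofFn J).drop (i : ℕ)) Ω) w : ℂ) • (wordOp s ((List.ofFn J).drop (i : ℕ)) Ω)) + (((inner ℂ (wordOp s ((List.ofFn J).drop (i : ℕ)) Ω) w : ℂ) - c) • (wordOp s ((List.ofFn J).drop (i : ℕ)) Ω))
                from by rw [sub_smul]; abel]
              exact norm_add_le _ _
          _ ≤ ‖(T ehat : H) - w‖ + ‖(T ehat : H) - w‖ := add_le_add h1 h3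
          _ ≤ 0 + 2 * ε := by linarith
      have h0 : ‖(T ehat : H) - c • (wordOp s ((List.ofFn J).drop (i : ℕ)) Ω)‖ ≤ 0 := by
        refine le_of_forall_pos_le_add fun ε hε => ?_
        calc ‖(T ehat : H) - c • (wordOp s ((List.ofFn J).drop (i : ℕ)) Ω)‖ ≤ 0 + 2 * (ε / 2) := hnorm (ε / 2) (by positivity)
          _ = 0 + ε := by ring
      exact sub_eq_zero.mp (norm_le_zero_iff.mp h0)
    refine ⟨c, ?_⟩
    have hgen : ∀ y : ↥(UHFSpan s (wordOp s ((List.ofFn J).drop (i : ℕ)) Ω)),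
        (y : H) ∈ {x : H | ∃ K L : List (Fin N), K.length = L.length
          ∧ x = (wordOp s K * star (wordOp s L)) (wordOp s ((List.ofFn J).drop (i : ℕ)) Ω)} →
        T y = c • y := by
      intro y hy
      obtain ⟨K, L, hKL, hyeq⟩ := hy
      have h := hT K L hKL ehat y hyeq
      apply Subtype.ext
      rw [Submodule.coe_smul, h, hTe, map_smul, hyeq]
    set f : ↥(UHFSpan s (wordOp s ((List.ofFn J).drop (i : ℕ)) Ω)) →L[ℂ] H :=
      (UHFSpan s (wordOp s ((List.ofFn J).drop (i : ℕ)) Ω)).subtypeL.comp T - c • (UHFSpan s (wordOp s ((List.ofFn J).drop (i : ℕ)) Ω)).subtypeL with hf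
    have hfapp : ∀ y : ↥(UHFSpan s (wordOp s ((List.ofFn J).drop (i : ℕ)) Ω)), f y = (T y : H) - c • (y : H) := fun y => rfl
    have hker : ∀ y : ↥(UHFSpan s (wordOp s ((List.ofFn J).drop (i : ℕ)) Ω)),
        (y : H) ∈ {x : H | ∃ K L : List (Fin N), K.length = L.length
          ∧ x = (wordOp s K * star (wordOp s L)) (wordOp s ((List.ofFn J).drop (i : ℕ)) Ω)} →
        y ∈ LinearMap.ker f.toLinearMap := by
      intro y hy
      rw [LinearMap.mem_ker, ContinuousLinearMap.coe_coe, hfapp y, hgen y hy, Submodule.coe_smul, sub_self]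
    have hspan : Submodule.span ℂ {x : H | ∃ K L : List (Fin N), K.length = L.length
          ∧ x = (wordOp s K * star (wordOp s L)) (wordOp s ((List.ofFn J).drop (i : ℕ)) Ω)}
        ≤ (LinearMap.ker f.toLinearMap).map (UHFSpan s (wordOp s ((List.ofFn J).drop (i : ℕ)) Ω)).subtype := by
      rw [Submodule.span_le]
      intro x hx
      have hxV : x ∈ UHFSpan s (wordOp s ((List.ofFn J).drop (i : ℕ)) Ω) :=
        Submodule.le_topologicalClosure _ (Submodule.subset_span hx)
      exact ⟨⟨x, hxV⟩, hker ⟨x, hxV⟩ hx, rfl⟩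
    intro x
    have hx2 : (x : H) ∈ closure
        (((LinearMap.ker f.toLinearMap).map (UHFSpan s (wordOp s ((List.ofFn J).drop (i : ℕ)) Ω)).subtype : Submodule ℂ H) : Set H) := by
      have h1 : (x : H) ∈ closure ((Submodule.span ℂ {x : H | ∃ K L : List (Fin N),
          K.length = L.length ∧ x = (wordOp s K * star (wordOp s L)) (wordOp s ((List.ofFn J).drop (i : ℕ)) Ω)} : Submodule ℂ H)
            : Set H) := by
        have h : (x : H) ∈ (Submodule.span ℂ {x : H | ∃ K L : List (Fin N),
            K.length = L.length ∧ x = (wordOp s K * star (wordOp s L)) (wordOp s ((List.ofFn J).drop (i : ℕ)) Ω)}).topologicalClosure :=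
          x.2
        rwa [← SetLike.mem_coe, Submodule.topologicalClosure_coe] at h
      exact closure_mono (fun z hz => hspan hz) h1
    obtain ⟨u, hu, hulim⟩ := mem_closure_iff_seq_limit.mp hx2
    choose z hzker hzeq using fun k => Submodule.mem_map.mp (hu k)
    have hztend : Filter.Tendsto z Filter.atTop (nhds x) := by
      rw [tendsto_subtype_rng]
      have heq : (fun k => ((z k : H))) = u := funext fun k => hzeq k
      rw [heq]
      exact hulim
    have hcont : Filter.Tendsto (fun k => f (z k)) Filter.atTop (nhds (f x)) :=
      (f.continuous.tendsto x).comp hztend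
    have hzero : Filter.Tendsto (fun k => f (z k)) Filter.atTop (nhds 0) := by
      have heq : (fun k => f (z k)) = fun _ => 0 :=
        funext fun k => LinearMap.mem_ker.mp (hzker k)
      rw [heq]
      exact tendsto_const_nhds
    have hfx : f x = 0 := tendsto_nhds_unique hcont hzero
    have hsub : (T x : H) - c • (x : H) = 0 := by rw [← hfapp x]; exact hfx
    apply Subtype.ext
    rw [Submodule.coe_smul]
    exact sub_eq_zero.mp hsub
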